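/- arXiv:1210.6174 — 3 statements merged into one kernel-verified Lean document; each statement's English description precedes it below -/
import Mathlib

section
/- For each index i, the natural map Z/d_i → (Z/d_1 ⊕ ... ⊕ Z/d_n)/⟨(1,...,1)⟩, induced by inclusion into the i-th summand followed by the quotient map, is injective if and only if d_i divides lcm(d_1,...,d_{i-1}, d_{i+1},...,d_n). -/
/-- For each index $i$, the natural map
$\mathbb{Z}/d_i \to (\bigoplus_j \mathbb{Z}/d_j)/\langle(1,\dots,1)\rangle$ is injective
iff $d_i \mid \mathrm{lcm}(d_1,\dots,\widehat{d_i},\dots,d_n)$. -/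
theorem stmt_2 (n : ℕ) (hn : 2 ≤ n) (d : Fin n → ℕ) (hd : ∀ i, 0 < d i) (i : Fin n) :
    Function.Injective
      ((QuotientAddGroup.mk' (AddSubgroup.zmultiples (fun j => (1 : ZMod (d j))))).comp
        (AddMonoidHom.single (fun j => ZMod (d j)) i)) ↔
      d i ∣ (Finset.univ.erase i).lcm d := by
  have hne : ∀ j, NeZero (d j) := fun j => ⟨(hd j).ne'⟩
  set L := (Finset.univ.erase i).lcm d with hL
  rw [injective_iff_map_eq_zero]
  constructor
  · intro hinj
    have h0 : ((QuotientAddGroup.mk' (AddSubgroup.zmultiples (fun j => (1 : ZMod (d j))))).comp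
        (AddMonoidHom.single (fun j => ZMod (d j)) i)) ((L : ZMod (d i))) = 0 := by
      rw [AddMonoidHom.comp_apply, QuotientAddGroup.mk'_apply, QuotientAddGroup.eq_zero_iff]
      refine ⟨(L : ℤ), ?_⟩
      funext j
      simp only [Pi.smul_apply, zsmul_one]
      by_cases hj : j = i
      · subst hj
        simp [AddMonoidHom.single_apply, Pi.single_eq_same]
      · have hdvd : d j ∣ L := Finset.dvd_lcm (Finset.mem_erase.mpr ⟨hj, Finset.mem_univ j⟩)
        have : ((L : ℤ) : ZMod (d j)) = 0 := by
          rw [Int.cast_natCast, ZMod.natCast_eq_zero_iff]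
          exact hdvd
        rw [this]
        simp [AddMonoidHom.single_apply, Pi.single_eq_of_ne hj]
    have := hinj _ h0
    rwa [ZMod.natCast_eq_zero_iff] at this
  · intro hdiv x hx
    rw [AddMonoidHom.comp_apply, QuotientAddGroup.mk'_apply, QuotientAddGroup.eq_zero_iff] at hx
    obtain ⟨k, hk⟩ := hx
    have hki : (k : ZMod (d i)) = x := by
      have := congrFun hk i
      simp only [Pi.smul_apply, zsmul_one] at this
      simpa [AddMonoidHom.single_apply, Pi.single_eq_same] using this
    have hkj : ∀ j, j ≠ i → (d j : ℤ) ∣ k := by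
      intro j hj
      have := congrFun hk j
      simp only [Pi.smul_apply, zsmul_one] at this
      simp [AddMonoidHom.single_apply, Pi.single_eq_of_ne hj] at this
      exact (ZMod.intCast_zmod_eq_zero_iff_dvd k (d j)).mp this
    have hLk : (L : ℤ) ∣ k := by
      rw [Int.natCast_dvd]
      exact Finset.lcm_dvd fun j hj =>
        Int.natCast_dvd.mp (hkj j (Finset.mem_erase.mp hj).1)
    have : (d i : ℤ) ∣ k := dvd_trans (Int.natCast_dvd_natCast.mpr hdiv) hLk
    rw [← hki, ZMod.intCast_zmod_eq_zero_iff_dvd]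
    exact this
end

section
/- Let r_1,...,r_n be elements of a lattice N ≅ Z^s generating a finite-index subgroup, let M = N^∨ = Hom(N,Z), and let ι : M → Z^n be the map m ↦ (m(r_1),...,m(r_n)), which is injective. Then the torsion subgroup of Z^n/ι(M) is isomorphic to N/⟨r_1,...,r_n⟩. -/
/-- Let $r_1,\dots,r_n$ be elements of a lattice $N$ generating a finite-index subgroup,
$M = \mathrm{Hom}(N,\mathbb{Z})$ and $\iota : M \to \mathbb{Z}^n$, $m \mapsto (m(r_i))_i$.
Then $\iota$ is injective and the torsion subgroup of $\mathbb{Z}^n/\iota(M)$ is isomorphic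
to $N/\langle r_1,\dots,r_n\rangle$. -/
theorem stmt_13 (N : Type*) [AddCommGroup N] [Module.Free ℤ N] [Module.Finite ℤ N]
    (n : ℕ) (r : Fin n → N) (hr : (AddSubgroup.closure (Set.range r)).FiniteIndex)
    (ι : (N →+ ℤ) →+ Fin n → ℤ) (hι : ∀ m i, ι m i = m (r i)) :
    Function.Injective ι ∧
      Nonempty ((AddCommGroup.torsion ((Fin n → ℤ) ⧸ ι.range)) ≃+
        (N ⧸ AddSubgroup.closure (Set.range r))) := by
  classical
  set L : Submodule ℤ N := Submodule.span ℤ (Set.range r) with hLdef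
  have hclos : AddSubgroup.closure (Set.range r) = L.toAddSubgroup :=
    (Submodule.span_int_eq_addSubgroupClosure _).symm
  obtain ⟨m, snf⟩ := L.smithNormalForm (Module.Free.chooseBasis ℤ N)
  have hindex : L.toAddSubgroup.index ≠ 0 := by
    rw [← hclos]; exact hr.index_ne_zero
  have hm : m = Fintype.card (Module.Free.ChooseBasisIndex ℤ N) :=
    snf.toAddSubgroup_index_ne_zero_iff.mp hindex
  have hbij : Function.Bijective snf.f := by
    rw [Fintype.bijective_iff_injective_and_card]
    exact ⟨snf.f.injective, by simpa using hm⟩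
  set σ : Fin m ≃ Module.Free.ChooseBasisIndex ℤ N := Equiv.ofBijective snf.f hbij with hσ
  set B : Module.Basis (Fin m) ℤ N := snf.bM.reindex σ.symm with hBdef
  have hB : ∀ k, B k = snf.bM (snf.f k) := by
    intro k; rw [hBdef, Module.Basis.reindex_apply, Equiv.symm_symm]; rfl
  set a : Fin m → ℤ := snf.a with hadef
  set c : Module.Basis (Fin m) ℤ L := snf.bN with hcdef
  have hsnf : ∀ k, (c k : N) = a k • B k := by
    intro k; rw [hB]; exact snf.snf k
  have ha : ∀ k, a k ≠ 0 := by
    intro k h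
    apply c.ne_zero k
    have : (c k : N) = 0 := by rw [hsnf k, h, zero_smul]
    exact Subtype.ext this
  set φ : N ≃ₗ[ℤ] (Fin m → ℤ) := B.equivFun with hφdef
  have hφsymm : ∀ z : Fin m → ℤ, φ.symm z = ∑ j, z j • B j := fun z =>
    B.equivFun_symm_apply z
  -- membership in L in terms of coordinates
  have hmemL : ∀ x : N, x ∈ L ↔ ∀ k, a k ∣ φ x k := by
    intro x
    rw [c.mem_submodule_iff']
    constructor
    · rintro ⟨t, rfl⟩ k
      have : (∑ j, t j • (c j : N)) = φ.symm fun j => t j * a j := by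
        rw [hφsymm]
        refine Finset.sum_congr rfl fun j _ => ?_
        rw [hsnf j, smul_smul]
      rw [this, LinearEquiv.apply_symm_apply]
      exact dvd_mul_left (a k) (t k)
    · intro h
      refine ⟨fun j => φ x j / a j, ?_⟩
      have hsum : ∑ j, (φ x j / a j) • (c j : N) = ∑ j, φ x j • B j := by
        refine Finset.sum_congr rfl fun j _ => ?_
        rw [hsnf j, smul_smul, Int.ediv_mul_cancel (h j)]
      rw [hsum, ← hφsymm, φ.symm_apply_apply]
  have hrL : ∀ i, r i ∈ L := fun i => Submodule.subset_span (Set.mem_range_self i)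
  set D : Fin m → Fin n → ℤ := fun k i => φ (r i) k / a k with hDdef
  have hD : ∀ k i, φ (r i) k = a k * D k i := fun k i =>
    (Int.mul_ediv_cancel' ((hmemL (r i)).mp (hrL i) k)).symm
  -- coefficients expressing c k in terms of the r i
  have hEex : ∀ k, ∃ E : Fin n → ℤ, ∑ i, E i • r i = (c k : N) := by
    intro k
    exact (Submodule.mem_span_range_iff_exists_fun ℤ).mp ((c k).2)
  choose E hEc using hEex
  have hED : ∀ k k', ∑ i, E k i * D k' i = if k' = k then 1 else 0 := by
    intro k k'
    have h1 : φ (∑ i, E k i • r i) k' = a k' * ∑ i, E k i * D k' i := by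
      rw [map_sum, Finset.sum_apply, Finset.mul_sum]
      refine Finset.sum_congr rfl fun i _ => ?_
      rw [map_smul]
      simp only [Pi.smul_apply, smul_eq_mul]
      rw [hD k' i]; ring
    have h2 : φ ((c k : N)) k' = if k' = k then a k else 0 := by
      rw [hsnf k, map_smul]
      simp only [Pi.smul_apply, smul_eq_mul, hφdef, Module.Basis.equivFun_self]
      by_cases h : k = k'
      · subst h; simp
      · simp [h, Ne.symm h]
    rw [hEc k] at h1
    rw [h1] at h2
    rcases eq_or_ne k' k with h | h
    · subst h
      rw [if_pos rfl] at h2 ⊢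
      exact mul_left_cancel₀ (ha k') (h2.trans (mul_one (a k')).symm)
    · rw [if_neg h] at h2 ⊢
      exact (mul_eq_zero.mp h2).resolve_left (ha k')
  -- the split injection u and its retraction π
  set u : (Fin m → ℤ) →+ (Fin n → ℤ) :=
    { toFun := fun t i => ∑ k, t k * D k i
      map_zero' := by funext i; simp
      map_add' := by
        intro s t; funext i
        simp [add_mul, Finset.sum_add_distrib] } with hudef
  set π : (Fin n → ℤ) →+ (Fin m → ℤ) :=
    { toFun := fun x k => ∑ i, E k i * x i
      map_zero' := by funext k; simp
      map_add' := by
        intro s t; funext k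
        simp [mul_add, Finset.sum_add_distrib] } with hπdef
  have hu_apply : ∀ t i, u t i = ∑ k, t k * D k i := fun t i => rfl
  have hπ_apply : ∀ x k, π x k = ∑ i, E k i * x i := fun x k => rfl
  have hπu : ∀ t, π (u t) = t := by
    intro t; funext k
    rw [hπ_apply]
    have : ∀ i, E k i * u t i = ∑ k', t k' * (E k i * D k' i) := by
      intro i
      rw [hu_apply, Finset.mul_sum]
      exact Finset.sum_congr rfl fun k' _ => by ring
    calc ∑ i, E k i * u t i = ∑ i, ∑ k', t k' * (E k i * D k' i) :=
          Finset.sum_congr rfl fun i _ => this i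
      _ = ∑ k', ∑ i, t k' * (E k i * D k' i) := Finset.sum_comm
      _ = ∑ k', t k' * ∑ i, E k i * D k' i := by
          refine Finset.sum_congr rfl fun k' _ => ?_
          rw [Finset.mul_sum]
      _ = ∑ k', t k' * if k' = k then 1 else 0 := by
          refine Finset.sum_congr rfl fun k' _ => by rw [hED]
      _ = t k := by simp
  have hu_inj : Function.Injective u := by
    intro s t h
    have := congrArg π h
    rwa [hπu, hπu] at this
  -- key computation for ι
  have key : ∀ m' : N →+ ℤ, ι m' = u (fun k => a k * m' (B k)) := by
    intro m'
    funext i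
    rw [hι m' i, hu_apply]
    have hx : r i = ∑ k, φ (r i) k • B k := by
      conv_lhs => rw [← φ.symm_apply_apply (r i)]
      rw [hφsymm]
    rw [hx, map_sum]
    refine Finset.sum_congr rfl fun k _ => ?_
    rw [AddMonoidHom.map_zsmul, smul_eq_mul, hD k i]
    ring
  -- range of ι
  have hrange : ∀ x : Fin n → ℤ, x ∈ ι.range ↔ ∃ t : Fin m → ℤ, x = u (fun k => a k * t k) := by
    intro x
    constructor
    · rintro ⟨m', rfl⟩
      exact ⟨fun k => m' (B k), key m'⟩
    · rintro ⟨t, rfl⟩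
      refine ⟨((B.constr ℤ t : N →ₗ[ℤ] ℤ)).toAddMonoidHom, ?_⟩
      have := key ((B.constr ℤ t : N →ₗ[ℤ] ℤ)).toAddMonoidHom
      rw [this]
      congr 1
      funext k
      simp [Module.Basis.constr_basis]
  -- injectivity of ι
  have hι_inj : Function.Injective ι := by
    rw [injective_iff_map_eq_zero]
    intro m' h0
    have h1 : u (fun k => a k * m' (B k)) = 0 := by
      rw [← key m', h0]
    have h2 : (fun k => a k * m' (B k)) = 0 := by
      have := congrArg π h1
      rwa [hπu, map_zero] at this
    have h3 : ∀ k, m' (B k) = 0 := by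
      intro k
      have := congrFun h2 k
      simp only [Pi.zero_apply] at this
      exact (mul_eq_zero.mp this).resolve_left (ha k)
    ext x
    have hx : x = ∑ k, φ x k • B k := by
      conv_lhs => rw [← φ.symm_apply_apply x]
      rw [hφsymm]
    rw [hx, map_sum]
    simp [AddMonoidHom.map_zsmul, h3]
  refine ⟨hι_inj, ?_⟩
  -- the homomorphism g
  set g : (Fin m → ℤ) →+ ((Fin n → ℤ) ⧸ ι.range) :=
    (QuotientAddGroup.mk' ι.range).comp u with hgdef
  -- kernel of g
  have hker : ∀ t, t ∈ g.ker ↔ ∀ k, a k ∣ t k := by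
    intro t
    rw [AddMonoidHom.mem_ker, hgdef, AddMonoidHom.comp_apply, QuotientAddGroup.mk'_apply,
      QuotientAddGroup.eq_zero_iff]
    rw [hrange]
    constructor
    · rintro ⟨t', ht'⟩
      have : t = fun k => a k * t' k := hu_inj ht'
      intro k
      rw [congrFun this k]
      exact Dvd.intro _ rfl
    · intro h
      exact ⟨fun k => t k / a k, by
        congr 1
        funext k
        rw [Int.mul_ediv_cancel' (h k)]⟩
  -- range of g is the torsion subgroup
  have htors : g.range = AddCommGroup.torsion ((Fin n → ℤ) ⧸ ι.range) := by
    ext x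
    rw [AddCommGroup.mem_torsion]
    constructor
    · rintro ⟨t, rfl⟩
      rw [isOfFinAddOrder_iff_nsmul_eq_zero]
      refine ⟨(∏ k, a k).natAbs, Int.natAbs_pos.mpr (Finset.prod_ne_zero_iff.mpr
        fun k _ => ha k), ?_⟩
      rw [← map_nsmul, hgdef, AddMonoidHom.comp_apply, QuotientAddGroup.mk'_apply,
        QuotientAddGroup.eq_zero_iff, hrange]
      have hdvd : ∀ k, a k ∣ ((∏ j, a j).natAbs : ℤ) :=
        fun k => dvd_trans (Finset.dvd_prod_of_mem a (Finset.mem_univ k))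
          (Int.dvd_natAbs.mpr dvd_rfl)
      refine ⟨fun k => (((∏ j, a j).natAbs : ℤ) / a k) * t k, ?_⟩
      congr 1
      funext k
      rw [Pi.smul_apply, nsmul_eq_mul, ← mul_assoc, Int.mul_ediv_cancel' (hdvd k)]
    · intro hx
      obtain ⟨y, rfl⟩ := QuotientAddGroup.mk'_surjective ι.range x
      obtain ⟨nn, hpos, hny⟩ := isOfFinAddOrder_iff_nsmul_eq_zero.mp hx
      rw [← map_nsmul, QuotientAddGroup.mk'_apply, QuotientAddGroup.eq_zero_iff,
        hrange] at hny
      obtain ⟨t, ht⟩ := hny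
      have h1 : u (nn • π y) = nn • y := by
        rw [← map_nsmul π, ht]
        have : π (u fun k => a k * t k) = fun k => a k * t k := hπu _
        rw [this, ← ht]
      have h2 : nn • (y - u (π y)) = 0 := by
        rw [smul_sub, ← map_nsmul u, h1, sub_self]
      have h3 : y = u (π y) := by
        have : y - u (π y) = 0 := by
          funext i
          have := congrFun h2 i
          simp only [Pi.smul_apply, Pi.zero_apply, smul_eq_zero] at this
          rcases this with h | h
          · omega
          · exact h
        have := sub_eq_zero.mp this
        exact this
      exact ⟨π y, by rw [hgdef, AddMonoidHom.comp_apply, QuotientAddGroup.mk'_apply, ← h3]; rfl⟩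
  -- assemble the isomorphisms
  have e1 : (AddCommGroup.torsion ((Fin n → ℤ) ⧸ ι.range)) ≃+ g.range :=
    AddEquiv.addSubgroupCongr htors.symm
  have e2 : ((Fin m → ℤ) ⧸ g.ker) ≃+ g.range :=
    QuotientAddGroup.quotientKerEquivRange g
  have hmap : AddSubgroup.map (φ.symm.toAddEquiv : (Fin m → ℤ) →+ N) g.ker
      = AddSubgroup.closure (Set.range r) := by
    ext y
    rw [hclos]
    constructor
    · rintro ⟨t, ht, rfl⟩
      rw [Submodule.mem_toAddSubgroup, hmemL]
      intro k
      show a k ∣ φ (φ.symm t) k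
      rw [φ.apply_symm_apply]
      exact (hker t).mp ht k
    · intro hy
      refine ⟨φ y, ?_, ?_⟩
      swap
      · show (φ.symm (φ y) : N) = y
        exact φ.symm_apply_apply y
      rw [Submodule.mem_toAddSubgroup, hmemL] at hy
      exact (hker (φ y)).mpr hy
  have e3 : ((Fin m → ℤ) ⧸ g.ker) ≃+ (N ⧸ AddSubgroup.closure (Set.range r)) :=
    QuotientAddGroup.congr g.ker (AddSubgroup.closure (Set.range r)) φ.symm.toAddEquiv hmap
  exact ⟨(e1.trans e2.symm).trans e3⟩
end

section
/- Let A be a finitely generated abelian group and B an abelian group with a surjection f : B → A whose kernel is a divisible group. Then Hom(B, Z) is a free abelian group of finite rank equal to the rank of A. -/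
/-- Precomposition with a surjection whose kernel is killed by every hom to `ℤ`
is an equivalence on hom groups. -/
noncomputable def homCompEquiv {A B : Type*} [AddCommGroup A] [AddCommGroup B]
    (f : B →+ A) (hf : Function.Surjective f)
    (hker : ∀ (φ : B →+ ℤ), ∀ x ∈ f.ker, φ x = 0) :
    (A →+ ℤ) ≃+ (B →+ ℤ) := by
  have hcongr : ∀ (φ : B →+ ℤ) (b₁ b₂ : B), f b₁ = f b₂ → φ b₁ = φ b₂ := by
    intro φ b₁ b₂ h
    have : φ (b₁ - b₂) = 0 := hker φ _ (by simp [AddMonoidHom.mem_ker, h])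
    simpa [sub_eq_zero] using this
  let g := Function.surjInv hf
  have hg : ∀ a, f (g a) = a := Function.surjInv_eq hf
  refine
    { toFun := fun ψ => ψ.comp f
      invFun := fun φ =>
        { toFun := fun a => φ (g a)
          map_zero' := by
            have := hcongr φ (g 0) 0 (by simp [hg])
            simpa using this
          map_add' := by
            intro a b
            have := hcongr φ (g (a + b)) (g a + g b) (by simp [hg])
            simpa using this }
      left_inv := by
        intro ψ
        ext a
        simp [hg]
      right_inv := by
        intro φ
        ext b
        exact hcongr φ (g (f b)) b (by simp [hg])
      map_add' := by intro ψ₁ ψ₂; rfl }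

/-- Let $A$ be a finitely generated abelian group and $f : B \to A$ a surjection with
divisible kernel. Then $\mathrm{Hom}(B,\mathbb{Z})$ is a free abelian group of finite rank
equal to the rank of $A$ (the rank of its free part $A/\mathrm{Tors}(A)$). -/
theorem stmt_16 (A B : Type*) [AddCommGroup A] [AddCommGroup B]
    (hfg : AddGroup.FG A) (f : B →+ A) (hf : Function.Surjective f)
    (hdiv : ∀ x ∈ f.ker, ∀ k : ℕ, 0 < k → ∃ y ∈ f.ker, k • y = x)
    (m : ℕ) (hrank : Nonempty ((A ⧸ AddCommGroup.torsion A) ≃+ (Fin m → ℤ))) :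
    Nonempty ((B →+ ℤ) ≃+ (Fin m → ℤ)) := by
  obtain ⟨e⟩ := hrank
  -- Step 1: (A →+ ℤ) ≃+ (B →+ ℤ)
  have e1 : (A →+ ℤ) ≃+ (B →+ ℤ) := by
    refine homCompEquiv f hf ?_
    intro φ x hx
    by_contra hne
    obtain ⟨y, hy, hky⟩ := hdiv x hx ((φ x).natAbs + 1) (Nat.succ_pos _)
    have hdvd : (((φ x).natAbs + 1 : ℕ) : ℤ) ∣ φ x := by
      refine ⟨φ y, ?_⟩
      have := congrArg φ hky
      simpa [mul_comm] using this.symm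
    have := Int.eq_zero_of_dvd_of_natAbs_lt_natAbs hdvd (by simp [Int.natAbs_add_of_nonneg, Int.natAbs_abs])
    exact hne this
  -- Step 2: ((A ⧸ torsion A) →+ ℤ) ≃+ (A →+ ℤ)
  have e2 : ((A ⧸ AddCommGroup.torsion A) →+ ℤ) ≃+ (A →+ ℤ) := by
    refine homCompEquiv (QuotientAddGroup.mk' _) (QuotientAddGroup.mk'_surjective _) ?_
    intro φ x hx
    rw [QuotientAddGroup.ker_mk'] at hx
    have htor : IsOfFinAddOrder x := hx
    obtain ⟨n, hn, hnx⟩ := htor.exists_nsmul_eq_zero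
    have : (n : ℤ) * φ x = 0 := by
      have := congrArg φ hnx
      simpa [mul_comm] using this
    rcases mul_eq_zero.mp this with h | h
    · exact absurd (by exact_mod_cast h) hn.ne'
    · exact h
  -- Step 3: ((Fin m → ℤ) →+ ℤ) ≃+ ((A ⧸ torsion A) →+ ℤ)
  have e3 : ((Fin m → ℤ) →+ ℤ) ≃+ ((A ⧸ AddCommGroup.torsion A) →+ ℤ) := by
    refine homCompEquiv e.toAddMonoidHom e.surjective ?_
    intro φ x hx
    have : x = 0 := by
      have : e x = 0 := hx
      simpa using congrArg e.symm this
    simp [this]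
  -- Step 4: ((Fin m → ℤ) →+ ℤ) ≃+ (Fin m → ℤ)
  have e4 : ((Fin m → ℤ) →+ ℤ) ≃+ (Fin m → ℤ) :=
    ((addMonoidHomLequivInt ℤ).trans
      (Pi.basisFun ℤ (Fin m)).dualBasis.equivFun).toAddEquiv
  exact ⟨(((e3.trans e2).trans e1).symm).trans e4⟩
end
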